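/- Lemma A.4 (bound on the closure set P): For any formula φ, let P be the smallest set of principal expressions such that: (1) if p ▷ q is a subformula of φ then p, q ∈ P; (2) if k cert (n ▷ p) is a subformula of φ then k's n ∈ P and k's p ∈ P; (3) if p ∈ P then the left-associative variant of p is in P; (4) P is closed under subexpressions (if p's q ∈ P then p, q ∈ P); (5) if key k ∈ P and local name n ∈ P then k's n ∈ P. Then |P| < 2·|φ|². -/

import Mathlib

/-- Principal expressions over keys `K`, global names `G`, local names `N`. -/
inductive PExp (K G N : Type*) where
  | key : K → PExp K G N
  | glob : G → PExp K G N
  | loc : N → PExp K G N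
  | s : PExp K G N → PExp K G N → PExp K G N

/-- Formulas of LLNC. -/
inductive Fml (K G N : Type*) where
  | bdto : PExp K G N → PExp K G N → Fml K G N
  | cert : K → Fml K G N → Fml K G N
  | not : Fml K G N → Fml K G N
  | and : Fml K G N → Fml K G N → Fml K G N

/-- A world: an interpretation of global names and an assignment of
certificates to keys, with only finitely many certificates issued. -/
structure World (K G N : Type*) where
  beta : G → Set K
  certs : K → Set (Fml K G N)
  finite_certs : (⋃ k, certs k).Finite

variable {K G N : Type*}

/-- The interpretation of a principal expression relative to a world, a
local name assignment, and a key. -/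
def interp (w : World K G N) (l : K → N → Set K) : PExp K G N → K → Set K
  | .key k', _ => {k'}
  | .glob g, _ => w.beta g
  | .loc n, k => l k n
  | .s p q, k => ⋃ k' ∈ interp w l p k, interp w l q k'

/-- Satisfaction of a formula at a world, local name assignment, and key. -/
def Sat (w : World K G N) (l : K → N → Set K) (k : K) : Fml K G N → Prop
  | .bdto p q => interp w l q k ⊆ interp w l p k
  | .cert k' φ => φ ∈ w.certs k'
  | .not φ => ¬ Sat w l k φ
  | .and φ ψ => Sat w l k φ ∧ Sat w l k ψ

/-- A local name assignment is consistent with a world if every issued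
binding certificate holds at the issuer. -/
def Consistent (w : World K G N) (l : K → N → Set K) : Prop :=
  ∀ (k : K) (n : N) (p : PExp K G N),
    Fml.bdto (.loc n) p ∈ w.certs k → Sat w l k (.bdto (.loc n) p)

/-- Number of symbols in a principal expression. -/
def PExp.len : PExp K G N → ℕ
  | .key _ => 1
  | .glob _ => 1
  | .loc _ => 1
  | .s p q => p.len + q.len + 1

/-- Number of symbols in a formula. -/
def Fml.len : Fml K G N → ℕ
  | .bdto p q => p.len + q.len + 1
  | .cert _ φ => φ.len + 2
  | .not φ => φ.len + 1
  | .and φ ψ => φ.len + ψ.len + 1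

/-- Keys appearing in a principal expression. -/
def PExp.keys : PExp K G N → Set K
  | .key k => {k}
  | .glob _ => ∅
  | .loc _ => ∅
  | .s p q => p.keys ∪ q.keys

/-- Keys appearing in a formula. -/
def Fml.keys : Fml K G N → Set K
  | .bdto p q => p.keys ∪ q.keys
  | .cert k φ => insert k φ.keys
  | .not φ => φ.keys
  | .and φ ψ => φ.keys ∪ ψ.keys

/-- Global names appearing in a principal expression. -/
def PExp.globs : PExp K G N → Set G
  | .key _ => ∅
  | .glob g => {g}
  | .loc _ => ∅
  | .s p q => p.globs ∪ q.globs

/-- Global names appearing in a formula. -/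
def Fml.globs : Fml K G N → Set G
  | .bdto p q => p.globs ∪ q.globs
  | .cert _ φ => φ.globs
  | .not φ => φ.globs
  | .and φ ψ => φ.globs ∪ ψ.globs

/-- The set of subformulas of a formula. -/
def Fml.subfmls : Fml K G N → Set (Fml K G N)
  | .bdto p q => {.bdto p q}
  | .cert k φ => insert (.cert k φ) φ.subfmls
  | .not φ => insert (.not φ) φ.subfmls
  | .and φ ψ => insert (.and φ ψ) (φ.subfmls ∪ ψ.subfmls)

/-- `C_φ(k)`: the bindings `n ▷ p` such that `k cert (n ▷ p)` is a subformula
of `φ`. -/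
def Cphi (φ : Fml K G N) (k : K) : Set (Fml K G N) :=
  {ψ | ∃ (n : N) (p : PExp K G N),
    ψ = Fml.bdto (.loc n) p ∧ Fml.cert k (Fml.bdto (.loc n) p) ∈ φ.subfmls}

/-- The list of basic subexpressions of a principal expression, in order. -/
def PExp.atoms : PExp K G N → List (PExp K G N)
  | .s p q => p.atoms ++ q.atoms
  | p => [p]

/-- The left-associative variant of a principal expression: the same sequence of
basic expressions, with all applications of `'s` associated to the left. -/
def leftAssoc (p : PExp K G N) : PExp K G N :=
  match p.atoms with
  | [] => p
  | a :: rest => rest.foldl PExp.s a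

/-- The smallest set `P` of principal expressions determined by the formula `φ`:
(1)–(2) it contains both sides of every `▷`-subformula and, for every
certificate subformula `k cert (n ▷ p)`, the expressions `k's n` and `k's p`;
(3) it is closed under left-associative variants; (4) under subexpressions; and
(5) contains `k's n` whenever it contains the key `k` and local name `n`. -/
inductive InP (φ : Fml K G N) : PExp K G N → Prop
  | bdto_left {p q : PExp K G N} : Fml.bdto p q ∈ φ.subfmls → InP φ p
  | bdto_right {p q : PExp K G N} : Fml.bdto p q ∈ φ.subfmls → InP φ q
  | cert_name {k : K} {n : N} {p : PExp K G N} :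
      Fml.cert k (.bdto (.loc n) p) ∈ φ.subfmls → InP φ ((PExp.key k).s (.loc n))
  | cert_expr {k : K} {n : N} {p : PExp K G N} :
      Fml.cert k (.bdto (.loc n) p) ∈ φ.subfmls → InP φ ((PExp.key k).s p)
  | leftAssocVariant {p : PExp K G N} : InP φ p → InP φ (leftAssoc p)
  | sub_left {p q : PExp K G N} : InP φ (p.s q) → InP φ p
  | sub_right {p q : PExp K G N} : InP φ (p.s q) → InP φ q
  | key_loc {k : K} {n : N} :
      InP φ (.key k) → InP φ (.loc n) → InP φ ((PExp.key k).s (.loc n))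

namespace CB


def subterms : PExp K G N → List (PExp K G N)
  | .s p q => .s p q :: (subterms p ++ subterms q)
  | .key k => [.key k]
  | .glob g => [.glob g]
  | .loc n => [.loc n]

lemma length_subterms (p : PExp K G N) : (subterms p).length = p.len := by
  induction p <;> simp [subterms, PExp.len, *]

lemma self_mem_subterms (p : PExp K G N) : p ∈ subterms p := by
  cases p <;> simp [subterms]

lemma subterms_subset {p q : PExp K G N} (h : q ∈ subterms p) : subterms q ⊆ subterms p := by
  induction p with
  | s p1 p2 ih1 ih2 =>
    simp only [subterms, List.mem_cons, List.mem_append] at h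
    rcases h with h | h | h
    · subst h; exact fun x hx => hx
    · intro x hx
      simp only [subterms, List.mem_cons, List.mem_append]
      exact Or.inr (Or.inl (ih1 h hx))
    · intro x hx
      simp only [subterms, List.mem_cons, List.mem_append]
      exact Or.inr (Or.inr (ih2 h hx))
  | key k => simp only [subterms, List.mem_singleton] at h; subst h; exact fun x hx => hx
  | glob g => simp only [subterms, List.mem_singleton] at h; subst h; exact fun x hx => hx
  | loc n => simp only [subterms, List.mem_singleton] at h; subst h; exact fun x hx => hx

lemma atoms_ne_nil (p : PExp K G N) : p.atoms ≠ [] := by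
  induction p <;> simp [PExp.atoms, *]

lemma atoms_infix_of_mem_subterms {p q : PExp K G N} (h : q ∈ subterms p) :
    q.atoms <:+: p.atoms := by
  induction p with
  | s p1 p2 ih1 ih2 =>
    simp only [subterms, List.mem_cons, List.mem_append] at h
    rcases h with h | h | h
    · subst h; exact List.infix_refl _
    · exact (ih1 h).trans (List.prefix_append _ _).isInfix
    · exact (ih2 h).trans (List.suffix_append _ _).isInfix
  | key k => simp only [subterms, List.mem_singleton] at h; subst h; exact List.infix_refl _
  | glob g => simp only [subterms, List.mem_singleton] at h; subst h; exact List.infix_refl _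
  | loc n => simp only [subterms, List.mem_singleton] at h; subst h; exact List.infix_refl _

lemma mem_atoms_basic {x p : PExp K G N} (h : x ∈ p.atoms) : x.atoms = [x] := by
  induction p with
  | s p1 p2 ih1 ih2 =>
    simp only [PExp.atoms, List.mem_append] at h
    rcases h with h | h
    · exact ih1 h
    · exact ih2 h
  | key k => simp only [PExp.atoms, List.mem_singleton] at h; subst h; rfl
  | glob g => simp only [PExp.atoms, List.mem_singleton] at h; subst h; rfl
  | loc n => simp only [PExp.atoms, List.mem_singleton] at h; subst h; rfl

lemma mem_atoms_ne_s {x p : PExp K G N} (h : x ∈ p.atoms) (a b : PExp K G N) :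
    x ≠ a.s b := by
  intro he
  have hb := mem_atoms_basic h
  subst he
  have : (a.s b).atoms = a.atoms ++ b.atoms := rfl
  rw [this] at hb
  have h1 := atoms_ne_nil a
  have h2 := atoms_ne_nil b
  have := congrArg List.length hb
  simp at this
  rcases List.exists_cons_of_ne_nil h1 with ⟨y, l, hy⟩
  rcases List.exists_cons_of_ne_nil h2 with ⟨z, l2, hz⟩
  rw [hy, hz] at this
  simp at this
  omega

lemma atoms_foldl (l : List (PExp K G N)) (a : PExp K G N) :
    (l.foldl PExp.s a).atoms = a.atoms ++ l.flatMap PExp.atoms := by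
  induction l generalizing a with
  | nil => simp
  | cons x l ih =>
    simp only [List.foldl_cons, ih, List.flatMap_cons]
    show _ = a.atoms ++ (x.atoms ++ _)
    rw [← List.append_assoc]; rfl

lemma flatMap_atoms_id {l : List (PExp K G N)} (h : ∀ x ∈ l, (PExp.atoms x) = [x]) :
    l.flatMap PExp.atoms = l := by
  induction l with
  | nil => rfl
  | cons x l ih =>
    simp only [List.flatMap_cons, h x (by simp), List.cons_append, List.nil_append]
    rw [ih (fun y hy => h y (by simp [hy]))]

lemma atoms_foldl_basic {l : List (PExp K G N)} {a : PExp K G N}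
    (ha : a.atoms = [a]) (h : ∀ x ∈ l, (PExp.atoms x) = [x]) :
    (l.foldl PExp.s a).atoms = a :: l := by
  rw [atoms_foldl, ha, flatMap_atoms_id h]; rfl

lemma foldl_concat' (a x : PExp K G N) (l : List (PExp K G N)) :
    (l ++ [x]).foldl PExp.s a = (l.foldl PExp.s a).s x := by
  rw [List.foldl_append]; rfl

def neInits : List (PExp K G N) → List (List (PExp K G N))
  | [] => []
  | a :: l => l.inits.map (a :: ·)

lemma length_neInits (l : List (PExp K G N)) : (neInits l).length = l.length := by
  cases l <;> simp [neInits]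

lemma mem_neInits {w l : List (PExp K G N)} (h : w <+: l) (hne : w ≠ []) :
    w ∈ neInits l := by
  rcases List.exists_cons_of_ne_nil hne with ⟨a, w', rfl⟩
  rcases l with _ | ⟨b, l⟩
  · simp at h
  · rw [List.cons_prefix_cons] at h
    rcases h with ⟨rfl, h⟩
    simp only [neInits, List.mem_map]
    exact ⟨w', (List.mem_inits _ _).2 h, rfl⟩

def contig (l : List (PExp K G N)) : List (List (PExp K G N)) := l.tails.flatMap neInits

lemma mem_contig {w l : List (PExp K G N)} (h : w <:+: l) (hne : w ≠ []) :
    w ∈ contig l := by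
  rcases List.infix_iff_prefix_suffix.1 h with ⟨t, h1, h2⟩
  exact List.mem_flatMap.2 ⟨t, (List.mem_tails _ _).2 h2, mem_neInits h1 hne⟩

lemma two_mul_length_contig (l : List (PExp K G N)) :
    2 * (contig l).length ≤ l.length * (l.length + 1) := by
  induction l with
  | nil => simp [contig, neInits]
  | cons a l ih =>
    have : contig (a :: l) = neInits (a :: l) ++ contig l := by
      simp [contig, List.tails]
    rw [this]
    simp only [List.length_append, length_neInits, List.length_cons]
    nlinarith [ih]



def certExtras (k : K) : Fml K G N → List (PExp K G N)
  | .bdto (.loc n) p => [(PExp.key k).s (.loc n), (PExp.key k).s p]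
  | _ => []

def baseExprs : Fml K G N → List (PExp K G N)
  | .bdto p q => [p, q]
  | .cert k ψ => certExtras k ψ ++ baseExprs ψ
  | .not ψ => baseExprs ψ
  | .and ψ χ => baseExprs ψ ++ baseExprs χ

def allAtoms (φ : Fml K G N) : List (PExp K G N) := (baseExprs φ).flatMap PExp.atoms

lemma pexp_len_pos (p : PExp K G N) : 1 ≤ p.len := by
  cases p <;> simp [PExp.len]

lemma fml_len_ge_3 (φ : Fml K G N) : 3 ≤ φ.len := by
  induction φ with
  | bdto p q => have := pexp_len_pos p; have := pexp_len_pos q; simp [Fml.len]; omega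
  | cert k ψ ih => simp [Fml.len]; omega
  | not ψ ih => simp [Fml.len]; omega
  | and ψ χ ih1 ih2 => simp [Fml.len]; omega

lemma two_mul_atoms_length (p : PExp K G N) : 2 * p.atoms.length = p.len + 1 := by
  induction p with
  | s p q ihp ihq => simp [PExp.atoms, PExp.len]; omega
  | key k => rfl
  | glob g => rfl
  | loc n => rfl

/-- S: total length of base expressions. -/
def S (φ : Fml K G N) : ℕ := ((baseExprs φ).map PExp.len).sum

/-- t: total atom count of base expressions. -/
def T (φ : Fml K G N) : ℕ := ((baseExprs φ).map (fun b => b.atoms.length)).sum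

lemma S_le (φ : Fml K G N) : S φ ≤ 2 * φ.len - 2 := by
  induction φ with
  | bdto p q =>
    have := pexp_len_pos p; have := pexp_len_pos q
    simp [S, baseExprs, Fml.len]; omega
  | cert k ψ ih =>
    have h3 := fml_len_ge_3 ψ
    cases ψ with
    | bdto p q =>
      cases p with
      | loc n =>
        have := pexp_len_pos q
        simp [S, baseExprs, certExtras, Fml.len, PExp.len] at *
        omega
      | key k' => simp [S, baseExprs, certExtras, Fml.len] at *; omega
      | glob g => simp [S, baseExprs, certExtras, Fml.len] at *; omega
      | s a b => simp [S, baseExprs, certExtras, Fml.len] at *; omega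
    | cert k' χ => simp [S, baseExprs, certExtras, Fml.len] at *; omega
    | not χ => simp [S, baseExprs, certExtras, Fml.len] at *; omega
    | and χ₁ χ₂ => simp [S, baseExprs, certExtras, Fml.len] at *; omega
  | not ψ ih =>
    have := fml_len_ge_3 ψ
    simp [S, baseExprs, Fml.len] at *; omega
  | and ψ χ ih1 ih2 =>
    have := fml_len_ge_3 ψ; have := fml_len_ge_3 χ
    simp [S, baseExprs, Fml.len] at *; omega

lemma T_le (φ : Fml K G N) : T φ ≤ φ.len + 1 := by
  induction φ with
  | bdto p q =>
    have hp := two_mul_atoms_length p; have hq := two_mul_atoms_length q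
    simp [T, baseExprs, Fml.len]; omega
  | cert k ψ ih =>
    have h3 := fml_len_ge_3 ψ
    cases ψ with
    | bdto p q =>
      cases p with
      | loc n =>
        have hq := two_mul_atoms_length q
        have hT : T (Fml.bdto (PExp.loc n) q) = 1 + q.atoms.length := by
          simp [T, baseExprs, PExp.atoms]
        have hL : (Fml.bdto (PExp.loc n) q).len = q.len + 2 := by
          simp [Fml.len, PExp.len]; omega
        simp [T, baseExprs, certExtras, Fml.len, PExp.atoms, PExp.len]
        omega
      | key k' => simp [T, baseExprs, certExtras, Fml.len] at *; omega
      | glob g => simp [T, baseExprs, certExtras, Fml.len] at *; omega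
      | s a b => simp [T, baseExprs, certExtras, Fml.len] at *; omega
    | cert k' χ => simp [T, baseExprs, certExtras, Fml.len] at *; omega
    | not χ => simp [T, baseExprs, certExtras, Fml.len] at *; omega
    | and χ₁ χ₂ => simp [T, baseExprs, certExtras, Fml.len] at *; omega
  | not ψ ih => simp [T, baseExprs, Fml.len] at *; omega
  | and ψ χ ih1 ih2 => simp [T, baseExprs, Fml.len] at *; omega

lemma T_le_small (φ : Fml K G N) (h : φ.len ≤ 4) : T φ + 1 ≤ φ.len := by
  induction φ with
  | bdto p q =>
    have hp := two_mul_atoms_length p; have hq := two_mul_atoms_length q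
    have := pexp_len_pos p; have := pexp_len_pos q
    simp [T, baseExprs, Fml.len] at *; omega
  | cert k ψ ih => have := fml_len_ge_3 ψ; simp [Fml.len] at h; omega
  | not ψ ih =>
    have := fml_len_ge_3 ψ
    simp [T, baseExprs, Fml.len] at *; omega
  | and ψ χ ih1 ih2 =>
    have := fml_len_ge_3 ψ; have := fml_len_ge_3 χ
    simp [Fml.len] at h; omega

/-- subformula facts give base expressions -/
lemma baseExprs_of_bdto {φ : Fml K G N} {p q : PExp K G N}
    (h : Fml.bdto p q ∈ φ.subfmls) : p ∈ baseExprs φ ∧ q ∈ baseExprs φ := by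
  induction φ with
  | bdto p' q' =>
    simp only [Fml.subfmls, Set.mem_singleton_iff] at h
    cases h
    simp [baseExprs]
  | cert k ψ ih =>
    simp only [Fml.subfmls, Set.mem_insert_iff] at h
    rcases h with h | h
    · exact absurd h (by simp)
    · have := ih h
      constructor <;> simp [baseExprs] <;> tauto
  | not ψ ih =>
    simp only [Fml.subfmls, Set.mem_insert_iff] at h
    rcases h with h | h
    · exact absurd h (by simp)
    · exact ih h
  | and ψ χ ih1 ih2 =>
    simp only [Fml.subfmls, Set.mem_insert_iff, Set.mem_union] at h
    rcases h with h | h | h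
    · exact absurd h (by simp)
    · have := ih1 h; constructor <;> simp [baseExprs] <;> tauto
    · have := ih2 h; constructor <;> simp [baseExprs] <;> tauto

lemma baseExprs_of_cert {φ : Fml K G N} {k : K} {n : N} {p : PExp K G N}
    (h : Fml.cert k (.bdto (.loc n) p) ∈ φ.subfmls) :
    (PExp.key k).s (.loc n) ∈ baseExprs φ ∧ (PExp.key k).s p ∈ baseExprs φ := by
  induction φ with
  | bdto p' q' =>
    simp only [Fml.subfmls, Set.mem_singleton_iff] at h
    exact absurd h (by simp)
  | cert k' ψ ih =>
    simp only [Fml.subfmls, Set.mem_insert_iff] at h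
    rcases h with h | h
    · injection h with h1 h2
      subst h1; subst h2
      simp [baseExprs, certExtras]
    · have := ih h
      constructor <;> simp [baseExprs] <;> tauto
  | not ψ ih =>
    simp only [Fml.subfmls, Set.mem_insert_iff] at h
    rcases h with h | h
    · exact absurd h (by simp)
    · exact ih h
  | and ψ χ ih1 ih2 =>
    simp only [Fml.subfmls, Set.mem_insert_iff, Set.mem_union] at h
    rcases h with h | h | h
    · exact absurd h (by simp)
    · have := ih1 h; constructor <;> simp [baseExprs] <;> tauto
    · have := ih2 h; constructor <;> simp [baseExprs] <;> tauto


def isKeyB : PExp K G N → Bool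
  | .key _ => true
  | _ => false

def isLocB : PExp K G N → Bool
  | .loc _ => true
  | _ => false

def Good (φ : Fml K G N) (p : PExp K G N) : Prop :=
  (∃ b ∈ baseExprs φ, p ∈ subterms b) ∨
  (∃ b ∈ baseExprs φ, ∃ a l, (a :: l) <:+: b.atoms ∧ p = l.foldl PExp.s a) ∨
  (∃ k n, p = (PExp.key k).s (.loc n) ∧ PExp.key k ∈ allAtoms φ ∧ PExp.loc n ∈ allAtoms φ)

lemma singleton_infix_of_mem {x : PExp K G N} {l : List (PExp K G N)} (h : x ∈ l) :
    [x] <:+: l := by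
  rcases List.append_of_mem h with ⟨s, t, rfl⟩
  exact ⟨s, t, by simp⟩

lemma leftAssoc_eq {p : PExp K G N} {a : PExp K G N} {l : List (PExp K G N)}
    (h : p.atoms = a :: l) : leftAssoc p = l.foldl PExp.s a := by
  unfold leftAssoc
  rw [h]

lemma good_leaf_mem {φ : Fml K G N} {x : PExp K G N}
    (hx : ∀ a b : PExp K G N, x ≠ a.s b) (h : Good φ x) : x ∈ allAtoms φ := by
  have hxa : x.atoms = [x] := by
    cases x with
    | s a b => exact absurd rfl (hx a b)
    | key k => rfl
    | glob g => rfl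
    | loc n => rfl
  rcases h with ⟨b, hb, hsub⟩ | ⟨b, hb, a, l, hinf, heq⟩ | ⟨k, n, heq, _, _⟩
  · have h1 : x.atoms <:+: b.atoms := atoms_infix_of_mem_subterms hsub
    rw [hxa] at h1
    exact List.mem_flatMap.2 ⟨b, hb, h1.subset (by simp)⟩
  · rcases List.eq_nil_or_concat l with rfl | ⟨l', y, rfl⟩
    · simp only [List.foldl_nil] at heq
      subst heq
      exact List.mem_flatMap.2 ⟨b, hb, hinf.subset (by simp)⟩
    · rw [List.concat_eq_append, foldl_concat'] at heq
      exact absurd heq (hx _ _)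
  · exact absurd heq (hx _ _)

lemma good_of_base {φ : Fml K G N} {b : PExp K G N} (hb : b ∈ baseExprs φ) : Good φ b :=
  Or.inl ⟨b, hb, self_mem_subterms b⟩

lemma good_leftAssoc {φ : Fml K G N} {p : PExp K G N} (h : Good φ p) :
    Good φ (leftAssoc p) := by
  rcases h with ⟨b, hb, hsub⟩ | ⟨b, hb, a, l, hinf, heq⟩ | ⟨k, n, heq, hk, hn⟩
  · have h1 : p.atoms <:+: b.atoms := atoms_infix_of_mem_subterms hsub
    rcases hp : p.atoms with _ | ⟨a, l⟩
    · exact absurd hp (atoms_ne_nil p)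
    · rw [hp] at h1
      exact Or.inr (Or.inl ⟨b, hb, a, l, h1, leftAssoc_eq hp⟩)
  · have hbasic : ∀ x ∈ a :: l, PExp.atoms x = [x] := fun x hx =>
      mem_atoms_basic (List.mem_flatMap.1 (by
        exact List.mem_flatMap.2 ⟨b, hb, hinf.subset hx⟩)).choose_spec.2
    -- simpler: all elements of a::l are in b.atoms
    have hbasic' : ∀ x ∈ a :: l, PExp.atoms x = [x] := fun x hx =>
      mem_atoms_basic (hinf.subset hx)
    have ha : PExp.atoms a = [a] := hbasic' a (by simp)
    have hl : ∀ x ∈ l, PExp.atoms x = [x] := fun x hx => hbasic' x (by simp [hx])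
    have hpa : p.atoms = a :: l := by rw [heq]; exact atoms_foldl_basic ha hl
    rw [leftAssoc_eq hpa, ← heq]
    exact Or.inr (Or.inl ⟨b, hb, a, l, hinf, heq⟩)
  · have hpa : p.atoms = [PExp.key k, PExp.loc n] := by rw [heq]; rfl
    rw [leftAssoc_eq hpa]
    exact Or.inr (Or.inr ⟨k, n, by simp, hk, hn⟩)

lemma good_mem_atoms {φ : Fml K G N} {x : PExp K G N} (h : x ∈ allAtoms φ) : Good φ x := by
  rcases List.mem_flatMap.1 h with ⟨b, hb, hx⟩
  exact Or.inr (Or.inl ⟨b, hb, x, [], singleton_infix_of_mem hx, rfl⟩)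

lemma good_sub {φ : Fml K G N} {p q : PExp K G N} (h : Good φ (p.s q)) :
    Good φ p ∧ Good φ q := by
  rcases h with ⟨b, hb, hsub⟩ | ⟨b, hb, a, l, hinf, heq⟩ | ⟨k, n, heq, hk, hn⟩
  · have hps : subterms (p.s q) ⊆ subterms b := subterms_subset hsub
    constructor
    · exact Or.inl ⟨b, hb, hps (by simp [subterms, self_mem_subterms])⟩
    · exact Or.inl ⟨b, hb, hps (by simp [subterms, self_mem_subterms])⟩
  · rcases List.eq_nil_or_concat l with rfl | ⟨l', y, rfl⟩
    · simp only [List.foldl_nil] at heq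
      have hmem : a ∈ b.atoms := hinf.subset (by simp)
      exact absurd heq.symm (mem_atoms_ne_s hmem p q)
    · rw [List.concat_eq_append, foldl_concat'] at heq
      rw [List.concat_eq_append] at hinf
      injection heq with h1 h2
      constructor
      · refine Or.inr (Or.inl ⟨b, hb, a, l', ?_, h1⟩)
        refine List.IsInfix.trans ?_ hinf
        have : a :: (l' ++ [y]) = (a :: l') ++ [y] := by simp
        rw [this]
        exact (List.prefix_append _ _).isInfix
      · have hy : y ∈ b.atoms := hinf.subset (by simp)
        subst h2
        exact good_mem_atoms (List.mem_flatMap.2 ⟨b, hb, hy⟩)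
  · injection heq with h1 h2
    subst h1; subst h2
    exact ⟨good_mem_atoms hk, good_mem_atoms hn⟩

lemma inp_good {φ : Fml K G N} {p : PExp K G N} (h : InP φ p) : Good φ p := by
  induction h with
  | bdto_left h => exact good_of_base (baseExprs_of_bdto h).1
  | bdto_right h => exact good_of_base (baseExprs_of_bdto h).2
  | cert_name h => exact good_of_base (baseExprs_of_cert h).1
  | cert_expr h => exact good_of_base (baseExprs_of_cert h).2
  | leftAssocVariant _ ih => exact good_leftAssoc ih
  | sub_left _ ih => exact (good_sub ih).1
  | sub_right _ ih => exact (good_sub ih).2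
  | key_loc _ _ ih1 ih2 =>
    have hk := good_leaf_mem (by intro a b h; cases h) ih1
    have hn := good_leaf_mem (by intro a b h; cases h) ih2
    exact Or.inr (Or.inr ⟨_, _, rfl, hk, hn⟩)

noncomputable def ftl [Nonempty K] : List (PExp K G N) → PExp K G N
  | [] => .key (Classical.arbitrary K)
  | a :: l => l.foldl PExp.s a

noncomputable def cand [Nonempty K] (φ : Fml K G N) : List (PExp K G N) :=
  (baseExprs φ).flatMap subterms
  ++ ((baseExprs φ).flatMap (fun b => contig b.atoms)).map ftl
  ++ ((allAtoms φ).filter isKeyB).flatMap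
      (fun a => ((allAtoms φ).filter isLocB).map (fun x => a.s x))

lemma good_mem_cand [Nonempty K] {φ : Fml K G N} {p : PExp K G N} (h : Good φ p) :
    p ∈ cand φ := by
  rcases h with ⟨b, hb, hsub⟩ | ⟨b, hb, a, l, hinf, heq⟩ | ⟨k, n, heq, hk, hn⟩
  · exact List.mem_append.2 (Or.inl (List.mem_append.2 (Or.inl
      (List.mem_flatMap.2 ⟨b, hb, hsub⟩))))
  · refine List.mem_append.2 (Or.inl (List.mem_append.2 (Or.inr ?_)))
    refine List.mem_map.2 ⟨a :: l, ?_, heq.symm ▸ rfl⟩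
    exact List.mem_flatMap.2 ⟨b, hb, mem_contig hinf (by simp)⟩
  · refine List.mem_append.2 (Or.inr ?_)
    refine List.mem_flatMap.2 ⟨PExp.key k, ?_, ?_⟩
    · exact List.mem_filter.2 ⟨hk, rfl⟩
    · exact List.mem_map.2 ⟨PExp.loc n, List.mem_filter.2 ⟨hn, rfl⟩, heq.symm⟩

lemma length_flatMap_contig (bs : List (PExp K G N)) :
    2 * (bs.flatMap (fun b => contig b.atoms)).length ≤
      (bs.map (fun b => b.atoms.length)).sum * ((bs.map (fun b => b.atoms.length)).sum + 1) := by
  induction bs with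
  | nil => simp
  | cons b bs ih =>
    simp only [List.flatMap_cons, List.length_append, List.map_cons, List.sum_cons]
    have h1 := two_mul_length_contig b.atoms
    nlinarith [ih, Nat.zero_le (b.atoms.length * (List.map (fun b => b.atoms.length) bs).sum)]

lemma keyloc_filter_le (l : List (PExp K G N)) :
    (l.filter isKeyB).length + (l.filter isLocB).length ≤ l.length := by
  induction l with
  | nil => simp
  | cons x l ih =>
    cases x <;> simp [List.filter_cons, isKeyB, isLocB] <;> omega

lemma sum_map_const_nat {α : Type*} (l : List α) (n : ℕ) :
    (l.map (fun _ => n)).sum = l.length * n := by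
  induction l with
  | nil => simp
  | cons a l ih => simp [ih]; ring

lemma length_allAtoms (φ : Fml K G N) : (allAtoms φ).length = T φ := by
  unfold allAtoms T
  rw [List.length_flatMap]

lemma cand_length_bound [Nonempty K] (φ : Fml K G N) :
    (cand φ).length < 2 * φ.len ^ 2 := by
  set n := φ.len with hn
  have h3 : 3 ≤ n := fml_len_ge_3 φ
  have hS : S φ ≤ 2 * n := by have := S_le φ; omega
  have hT : T φ ≤ n + 1 := T_le φ
  -- pieces
  have hlen1 : ((baseExprs φ).flatMap subterms).length = S φ := by
    rw [List.length_flatMap]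
    unfold S
    congr 1
    exact List.map_congr_left (fun b _ => length_subterms b)
  have hlen2 := length_flatMap_contig (baseExprs φ)
  have hlen3 : (((allAtoms φ).filter isKeyB).flatMap
      (fun a => ((allAtoms φ).filter isLocB).map (fun x => a.s x))).length =
      ((allAtoms φ).filter isKeyB).length * ((allAtoms φ).filter isLocB).length := by
    rw [List.length_flatMap]
    have hfn : (List.length ∘ fun a : PExp K G N =>
        ((allAtoms φ).filter isLocB).map (fun x => PExp.s a x)) =
        fun _ => ((allAtoms φ).filter isLocB).length := by
      funext a; simp
    simp only [List.length_map, sum_map_const_nat]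
  have hKL := keyloc_filter_le (allAtoms φ)
  rw [length_allAtoms] at hKL
  set Kk := ((allAtoms φ).filter isKeyB).length
  set Ll := ((allAtoms φ).filter isLocB).length
  have hc : (cand φ).length = S φ +
      ((baseExprs φ).flatMap (fun b => contig b.atoms)).length + Kk * Ll := by
    simp only [cand, List.length_append, List.length_map, hlen1, hlen3]
  have h4KL : 4 * (Kk * Ll) ≤ T φ * T φ := by
    zify at hKL ⊢
    nlinarith [sq_nonneg ((Kk:ℤ) - Ll), hKL, Int.natCast_nonneg Kk, Int.natCast_nonneg Ll]
  have hTfold : ((baseExprs φ).map (fun b => b.atoms.length)).sum = T φ := rfl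
  rw [hTfold] at hlen2
  have hc4 : 4 * (cand φ).length ≤ 4 * S φ + 2 * (T φ * (T φ + 1)) + T φ * T φ := by
    omega
  have h3n : 3 * n ≤ n * n := Nat.mul_le_mul_right n h3
  have hgoal : 4 * (cand φ).length < 4 * (2 * n ^ 2) := by
    rcases le_or_gt n 4 with hsmall | hbig
    · have hTs : T φ + 1 ≤ n := T_le_small φ hsmall
      have h1 : (T φ + 1) * (T φ + 1) ≤ n * n := Nat.mul_le_mul hTs hTs
      nlinarith [hc4, hS, h1, h3n]
    · have h1 : T φ * T φ ≤ (n + 1) * (n + 1) := Nat.mul_le_mul hT hT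
      have h2 : T φ * (T φ + 1) ≤ (n + 1) * (n + 2) := Nat.mul_le_mul hT (by omega)
      have h5n : 5 * n ≤ n * n := Nat.mul_le_mul_right n hbig
      nlinarith [hc4, hS, h1, h2, h5n]
  omega

end CB

/-- Lemma A.4: the closure set `P` of `φ` has fewer than
`2·|φ|²` elements. -/
theorem closure_set_bound [Nonempty K] (φ : Fml K G N) :
    Cardinal.mk {p : PExp K G N | InP φ p} < 2 * (φ.len : Cardinal) ^ 2 := by
  classical
  have hsub : {p : PExp K G N | InP φ p} ⊆ {p | p ∈ CB.cand φ} :=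
    fun p hp => CB.good_mem_cand (CB.inp_good hp)
  have h1 : Cardinal.mk {p : PExp K G N | InP φ p} ≤
      Cardinal.mk {p : PExp K G N | p ∈ CB.cand φ} := Cardinal.mk_le_mk_of_subset hsub
  have h2 : {p : PExp K G N | p ∈ CB.cand φ} = ↑(CB.cand φ).toFinset := by
    ext x; simp
  rw [h2] at h1
  have h3 : Cardinal.mk ↑(CB.cand φ).toFinset = ((CB.cand φ).toFinset.card : Cardinal) :=
    Cardinal.mk_coe_finset
  have h4 : (CB.cand φ).toFinset.card ≤ (CB.cand φ).length := List.toFinset_card_le _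
  have h5 : (CB.cand φ).length < 2 * φ.len ^ 2 := CB.cand_length_bound φ
  have h6 : (CB.cand φ).toFinset.card < 2 * φ.len ^ 2 := lt_of_le_of_lt h4 h5
  calc Cardinal.mk {p : PExp K G N | InP φ p}
      ≤ ((CB.cand φ).toFinset.card : Cardinal) := h3 ▸ h1
    _ < ((2 * φ.len ^ 2 : ℕ) : Cardinal) := by exact_mod_cast h6
    _ = 2 * (φ.len : Cardinal) ^ 2 := by push_cast; ring
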